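/- Let ℓ : {0,1} × [0,1] → [−1,1] be a consistent scoring function for the mean, i.e. for all p, c ∈ [0,1]: (1−p)ℓ(0,p) + pℓ(1,p) ≤ (1−p)ℓ(0,c) + pℓ(1,c). Let T be a finite nonempty set, y : T → {0,1}, v : T → [0,1], and T_γ := {t ∈ T : v_t = γ}. Then the swap regret is bounded by four times the (unnormalized) expected calibration error: sup_{σ : [0,1] → [0,1]} Σ_{t∈T} (ℓ(y_t, v_t) − ℓ(y_t, σ(v_t))) ≤ 4 Σ_{γ ∈ range(v)} |Σ_{t∈T_γ} (y_t − γ)|. -/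
import Mathlib

lemma key17 (ℓ : ℝ → ℝ → ℝ)
    (hbound : ∀ a ∈ ({0, 1} : Set ℝ), ∀ c ∈ Set.Icc (0 : ℝ) 1,
      ℓ a c ∈ Set.Icc (-1 : ℝ) 1)
    (hcons : ∀ p ∈ Set.Icc (0 : ℝ) 1, ∀ c ∈ Set.Icc (0 : ℝ) 1,
      (1 - p) * ℓ 0 p + p * ℓ 1 p ≤ (1 - p) * ℓ 0 c + p * ℓ 1 c)
    {T : Type*} [Fintype T]
    (y : T → ℝ) (hy : ∀ t, y t = 0 ∨ y t = 1)
    (v : T → ℝ)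
    (γ : ℝ) (hγ : γ ∈ Set.Icc (0 : ℝ) 1) (c : ℝ) (hc : c ∈ Set.Icc (0 : ℝ) 1) :
    ∑ t ∈ Finset.univ.filter (fun t => v t = γ), (ℓ (y t) γ - ℓ (y t) c)
      ≤ 4 * |∑ t ∈ Finset.univ.filter (fun t => v t = γ), (y t - γ)| := by
  set A := Finset.univ.filter (fun t => v t = γ) with hA
  rcases A.eq_empty_or_nonempty with h | h
  · simp [h]
  set n : ℝ := (A.card : ℝ) with hn
  have hnpos : (0 : ℝ) < n := by
    rw [hn]; exact_mod_cast Finset.card_pos.2 h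
  set S : ℝ := ∑ t ∈ A, y t with hS
  have hS0 : 0 ≤ S := Finset.sum_nonneg fun t _ => by rcases hy t with h' | h' <;> simp [h']
  have hSn : S ≤ n := by
    have := Finset.sum_le_card_nsmul A y 1 (fun t _ => by rcases hy t with h' | h' <;> simp [h'])
    simpa [hS, hn] using this
  set q : ℝ := S / n with hq
  have hqI : q ∈ Set.Icc (0 : ℝ) 1 := by
    constructor
    · exact div_nonneg hS0 hnpos.le
    · rw [hq, div_le_one hnpos]; exact hSn
  have hnq : n * q = S := by
    rw [hq]; field_simp
  -- sum identities
  have hsumy : ∑ t ∈ A, (y t - γ) = S - n * γ := by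
    rw [Finset.sum_sub_distrib, Finset.sum_const, ← hS]
    simp [hn, mul_comm]
  have hsumℓ : ∑ t ∈ A, (ℓ (y t) γ - ℓ (y t) c)
      = (n - S) * (ℓ 0 γ - ℓ 0 c) + S * (ℓ 1 γ - ℓ 1 c) := by
    have : ∀ t ∈ A, ℓ (y t) γ - ℓ (y t) c
        = (1 - y t) * (ℓ 0 γ - ℓ 0 c) + y t * (ℓ 1 γ - ℓ 1 c) := by
      intro t _
      rcases hy t with h' | h' <;> simp [h']
    rw [Finset.sum_congr rfl this, Finset.sum_add_distrib, ← Finset.sum_mul, ← Finset.sum_mul,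
      Finset.sum_sub_distrib, Finset.sum_const, ← hS]
    simp [hn]
  rw [hsumy, hsumℓ]
  -- bounds on ℓ values
  have h0m : (0 : ℝ) ∈ ({0, 1} : Set ℝ) := by simp
  have h1m : (1 : ℝ) ∈ ({0, 1} : Set ℝ) := by simp
  obtain ⟨ha0l, ha0u⟩ := hbound 0 h0m γ hγ
  obtain ⟨ha1l, ha1u⟩ := hbound 1 h1m γ hγ
  obtain ⟨hq0l, hq0u⟩ := hbound 0 h0m q hqI
  obtain ⟨hq1l, hq1u⟩ := hbound 1 h1m q hqI
  have h1' := hcons q hqI c hc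
  have h2' := hcons γ hγ q hqI
  -- scale h1' by n
  have e0 : n * (1 - q) = n - S := by rw [mul_sub, mul_one, hnq]
  have keyid : ∀ x z : ℝ, n * ((1 - q) * x + q * z) = (n - S) * x + S * z := fun x z => by
    rw [mul_add, ← mul_assoc, ← mul_assoc, e0, hnq]
  have h1n : (n - S) * ℓ 0 q + S * ℓ 1 q ≤ (n - S) * ℓ 0 c + S * ℓ 1 c := by
    have e := mul_le_mul_of_nonneg_left h1' hnpos.le
    rw [keyid, keyid] at e
    exact e
  have h2n : (n - n * γ) * ℓ 0 γ + (n * γ) * ℓ 1 γ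
      ≤ (n - n * γ) * ℓ 0 q + (n * γ) * ℓ 1 q := by
    have := mul_le_mul_of_nonneg_left h2' hnpos.le
    nlinarith
  -- the cross term
  have hd : |ℓ 1 γ - ℓ 1 q - ℓ 0 γ + ℓ 0 q| ≤ 4 := by
    rw [abs_le]; constructor <;> linarith
  have hcross : (S - n * γ) * (ℓ 1 γ - ℓ 1 q - ℓ 0 γ + ℓ 0 q) ≤ 4 * |S - n * γ| := by
    calc (S - n * γ) * (ℓ 1 γ - ℓ 1 q - ℓ 0 γ + ℓ 0 q)
        ≤ |(S - n * γ) * (ℓ 1 γ - ℓ 1 q - ℓ 0 γ + ℓ 0 q)| := le_abs_self _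
      _ = |S - n * γ| * |ℓ 1 γ - ℓ 1 q - ℓ 0 γ + ℓ 0 q| := abs_mul _ _
      _ ≤ |S - n * γ| * 4 := mul_le_mul_of_nonneg_left hd (abs_nonneg _)
      _ = 4 * |S - n * γ| := mul_comm _ _
  nlinarith [h1n, h2n, hcross]

theorem stmt17 (ℓ : ℝ → ℝ → ℝ)
    (hbound : ∀ a ∈ ({0, 1} : Set ℝ), ∀ c ∈ Set.Icc (0 : ℝ) 1,
      ℓ a c ∈ Set.Icc (-1 : ℝ) 1)
    (hcons : ∀ p ∈ Set.Icc (0 : ℝ) 1, ∀ c ∈ Set.Icc (0 : ℝ) 1,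
      (1 - p) * ℓ 0 p + p * ℓ 1 p ≤ (1 - p) * ℓ 0 c + p * ℓ 1 c)
    {T : Type*} [Fintype T] [Nonempty T]
    (y : T → ℝ) (hy : ∀ t, y t = 0 ∨ y t = 1)
    (v : T → ℝ) (hv : ∀ t, v t ∈ Set.Icc (0 : ℝ) 1) :
    (⨆ σ : {f : ℝ → ℝ // ∀ x ∈ Set.Icc (0 : ℝ) 1, f x ∈ Set.Icc (0 : ℝ) 1},
        ∑ t, (ℓ (y t) (v t) - ℓ (y t) (σ.1 (v t))))
      ≤ 4 * ∑ γ ∈ Finset.image v Finset.univ,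
          |∑ t ∈ Finset.univ.filter (fun t => v t = γ), (y t - γ)| := by
  haveI : Nonempty {f : ℝ → ℝ // ∀ x ∈ Set.Icc (0 : ℝ) 1, f x ∈ Set.Icc (0 : ℝ) 1} :=
    ⟨⟨id, fun x hx => hx⟩⟩
  apply ciSup_le
  intro σ
  rw [← Finset.sum_fiberwise_of_maps_to (g := v) (t := Finset.image v Finset.univ)
    (fun t _ => Finset.mem_image_of_mem v (Finset.mem_univ t)), Finset.mul_sum]
  apply Finset.sum_le_sum
  intro γ hγmem
  obtain ⟨t0, _, ht0⟩ := Finset.mem_image.1 hγmem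
  have hγI : γ ∈ Set.Icc (0 : ℝ) 1 := ht0 ▸ hv t0
  have hrw : ∑ t ∈ Finset.univ.filter (fun t => v t = γ), (ℓ (y t) (v t) - ℓ (y t) (σ.1 (v t)))
      = ∑ t ∈ Finset.univ.filter (fun t => v t = γ), (ℓ (y t) γ - ℓ (y t) (σ.1 γ)) := by
    refine Finset.sum_congr rfl fun t ht => ?_
    have := (Finset.mem_filter.1 ht).2
    rw [this]
  rw [hrw]
  exact key17 ℓ hbound hcons y hy v γ hγI (σ.1 γ) (σ.2 γ hγI)
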